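/- As formal power series in q, Σ_{n≥1} q^{n^2} / (−q; q^2)_n = Σ_{n≥1} (−1)^{n−1} q^n (q^2; q^2)_{n−1}. -/

import Mathlib

open PowerSeries Finset

/-- `Σ_{n ≥ 1} q^{n²} / (−q;q²)_n` as a formal power series over `ℚ`
(the term of index `n` has order `n² ≥ n`). -/
noncomputable def sigmaStarSum : PowerSeries ℚ :=
  PowerSeries.mk fun N =>
    coeff N (∑ n ∈ Finset.Icc 1 (N + 1),
      (X : PowerSeries ℚ) ^ (n ^ 2) *
        (∏ k ∈ Finset.range n, (1 + (X : PowerSeries ℚ) ^ (2 * k + 1)))⁻¹)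

/-- `Σ_{n ≥ 1} (−1)^{n−1} q^n (q²;q²)_{n−1}` as a formal power series over `ℚ`
(the term of index `n` has order `n`). -/
noncomputable def altSum : PowerSeries ℚ :=
  PowerSeries.mk fun N =>
    coeff N (∑ n ∈ Finset.Icc 1 (N + 1),
      ((-1 : PowerSeries ℚ)) ^ (n - 1) * (X : PowerSeries ℚ) ^ n *
        (∏ k ∈ Finset.Icc 1 (n - 1), (1 - (X : PowerSeries ℚ) ^ (2 * k))))

/-! ### Auxiliary hierarchies

`FFk k = Σ_{n≥0} q^{(n+1)²+2kn} / ∏_{j≤n}(1+q^{2(k+j)+1})` and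
`GGk k = Σ_{n≥0} (−1)^n q^{(2k+1)n+1} (q²;q²)_n` both satisfy the functional
equation `(1+X^(2k+1)) * H k = X + X^(2k+3) * H (k+1)` (modulo any `X^(N+1)`),
which forces `FFk 0 = GGk 0`, i.e. `sigmaStarSum = altSum`. -/

noncomputable def aT (k n : ℕ) : PowerSeries ℚ :=
  (X : PowerSeries ℚ) ^ ((n + 1) ^ 2 + 2 * k * n) *
    (∏ j ∈ Finset.range (n + 1), (1 + (X : PowerSeries ℚ) ^ (2 * (k + j) + 1)))⁻¹

noncomputable def bT (k n : ℕ) : PowerSeries ℚ :=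
  ((-1 : PowerSeries ℚ)) ^ n * (X : PowerSeries ℚ) ^ ((2 * k + 1) * n + 1) *
    (∏ j ∈ Finset.Icc 1 n, (1 - (X : PowerSeries ℚ) ^ (2 * j)))

noncomputable def FFk (k : ℕ) : PowerSeries ℚ :=
  PowerSeries.mk fun N => coeff N (∑ n ∈ Finset.range (N + 1), aT k n)

noncomputable def GGk (k : ℕ) : PowerSeries ℚ :=
  PowerSeries.mk fun N => coeff N (∑ n ∈ Finset.range (N + 1), bT k n)

lemma constCoeff_prod_ne (s : Finset ℕ) (f : ℕ → ℕ) :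
    constantCoeff (∏ j ∈ s, (1 + (X : PowerSeries ℚ) ^ (2 * f j + 1))) ≠ 0 := by
  rw [map_prod]
  apply Finset.prod_ne_zero_iff.mpr
  intro j _
  simp

lemma Hinv (u v : PowerSeries ℚ) (hu : constantCoeff u ≠ 0) (hv : constantCoeff v ≠ 0) :
    u * (v * u)⁻¹ = v⁻¹ := by
  have hv0 : v ≠ 0 := fun h => hv (by simp [h])
  apply mul_right_cancel₀ hv0
  have h1 : (v * u) * (v * u)⁻¹ = 1 :=
    PowerSeries.mul_inv_cancel _ (by rw [map_mul]; exact mul_ne_zero hv hu)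
  have h2 : v⁻¹ * v = 1 := PowerSeries.inv_mul_cancel _ hv
  rw [h2]
  linear_combination h1

lemma aT_dvd (k n : ℕ) : (X : PowerSeries ℚ) ^ (n + 1) ∣ aT k n := by
  refine Dvd.dvd.mul_right ?_ _
  apply pow_dvd_pow
  nlinarith

lemma bT_dvd (k n : ℕ) : (X : PowerSeries ℚ) ^ (n + 1) ∣ bT k n := by
  refine Dvd.dvd.mul_right (Dvd.dvd.mul_left ?_ _) _
  apply pow_dvd_pow
  nlinarith

lemma coeff_sum_ext (f : ℕ → PowerSeries ℚ) (h : ∀ n, (X : PowerSeries ℚ) ^ (n + 1) ∣ f n)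
    {j M : ℕ} (hj : j < M) :
    coeff j (∑ n ∈ Finset.range M, f n) = coeff j (∑ n ∈ Finset.range (j + 1), f n) := by
  rw [map_sum, map_sum]
  refine (Finset.sum_subset (Finset.range_subset_range.mpr hj) ?_).symm
  intro n _ hn
  rw [Finset.mem_range, not_lt] at hn
  exact (PowerSeries.X_pow_dvd_iff.mp (h n)) j (by omega)

lemma FFk_approx (k N M : ℕ) (hNM : N < M) :
    (X : PowerSeries ℚ) ^ (N + 1) ∣ FFk k - ∑ n ∈ Finset.range M, aT k n := by
  rw [PowerSeries.X_pow_dvd_iff]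
  intro m hm
  rw [map_sub, FFk, coeff_mk, coeff_sum_ext _ (aT_dvd k) (by omega : m < M),
    coeff_sum_ext _ (aT_dvd k) (by omega : m < m + 1), sub_self]

lemma GGk_approx (k N M : ℕ) (hNM : N < M) :
    (X : PowerSeries ℚ) ^ (N + 1) ∣ GGk k - ∑ n ∈ Finset.range M, bT k n := by
  rw [PowerSeries.X_pow_dvd_iff]
  intro m hm
  rw [map_sub, GGk, coeff_mk, coeff_sum_ext _ (bT_dvd k) (by omega : m < M),
    coeff_sum_ext _ (bT_dvd k) (by omega : m < m + 1), sub_self]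

lemma aT_zero (k : ℕ) : (1 + (X : PowerSeries ℚ) ^ (2 * k + 1)) * aT k 0 = X := by
  rw [aT]
  have h1 : ∏ j ∈ Finset.range (0 + 1), (1 + (X : PowerSeries ℚ) ^ (2 * (k + j) + 1)) =
      1 + (X : PowerSeries ℚ) ^ (2 * k + 1) := by simp
  rw [h1]
  have hc : constantCoeff (1 + (X : PowerSeries ℚ) ^ (2 * k + 1)) ≠ 0 := by simp
  have hmi := PowerSeries.mul_inv_cancel _ hc
  calc (1 + (X : PowerSeries ℚ) ^ (2 * k + 1)) *
        ((X : PowerSeries ℚ) ^ ((0 + 1) ^ 2 + 2 * k * 0) *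
          (1 + (X : PowerSeries ℚ) ^ (2 * k + 1))⁻¹)
      = ((1 + (X : PowerSeries ℚ) ^ (2 * k + 1)) *
          (1 + (X : PowerSeries ℚ) ^ (2 * k + 1))⁻¹) * X ^ 1 := by ring
    _ = X := by rw [hmi]; ring

lemma aT_succ (k n : ℕ) :
    (1 + (X : PowerSeries ℚ) ^ (2 * k + 1)) * aT k (n + 1) =
      (X : PowerSeries ℚ) ^ (2 * k + 3) * aT (k + 1) n := by
  rw [aT, aT, Finset.prod_range_succ']
  have hP : ∏ j ∈ Finset.range (n + 1), (1 + (X : PowerSeries ℚ) ^ (2 * (k + (j + 1)) + 1)) =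
      ∏ j ∈ Finset.range (n + 1), (1 + (X : PowerSeries ℚ) ^ (2 * (k + 1 + j) + 1)) := by
    refine Finset.prod_congr rfl fun j _ => ?_
    congr 2
    ring
  rw [hP]
  have hu : (1 : PowerSeries ℚ) + (X : PowerSeries ℚ) ^ (2 * (k + 0) + 1) =
      1 + (X : PowerSeries ℚ) ^ (2 * k + 1) := by norm_num
  rw [hu]
  set V : PowerSeries ℚ :=
    ∏ j ∈ Finset.range (n + 1), (1 + (X : PowerSeries ℚ) ^ (2 * (k + 1 + j) + 1)) with hV
  have hVc : constantCoeff V ≠ 0 := constCoeff_prod_ne _ (fun j => k + 1 + j)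
  have huc : constantCoeff (1 + (X : PowerSeries ℚ) ^ (2 * k + 1)) ≠ 0 := by simp
  have key := Hinv (1 + (X : PowerSeries ℚ) ^ (2 * k + 1)) V huc hVc
  have he : (n + 1 + 1) ^ 2 + 2 * k * (n + 1) = (2 * k + 3) + ((n + 1) ^ 2 + 2 * (k + 1) * n) := by
    ring
  calc (1 + (X : PowerSeries ℚ) ^ (2 * k + 1)) *
        ((X : PowerSeries ℚ) ^ ((n + 1 + 1) ^ 2 + 2 * k * (n + 1)) *
          (V * (1 + (X : PowerSeries ℚ) ^ (2 * k + 1)))⁻¹)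
      = (X : PowerSeries ℚ) ^ ((n + 1 + 1) ^ 2 + 2 * k * (n + 1)) *
          ((1 + (X : PowerSeries ℚ) ^ (2 * k + 1)) *
            (V * (1 + (X : PowerSeries ℚ) ^ (2 * k + 1)))⁻¹) := by ring
    _ = (X : PowerSeries ℚ) ^ ((n + 1 + 1) ^ 2 + 2 * k * (n + 1)) * V⁻¹ := by rw [key]
    _ = (X : PowerSeries ℚ) ^ (2 * k + 3) *
          ((X : PowerSeries ℚ) ^ ((n + 1) ^ 2 + 2 * (k + 1) * n) * V⁻¹) := by
        rw [he, pow_add]; ring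

lemma bT_zero (k : ℕ) : bT k 0 = X := by
  simp [bT]

lemma bT_succ (k n : ℕ) :
    bT k (n + 1) + (X : PowerSeries ℚ) ^ (2 * k + 1) * bT k n =
      (X : PowerSeries ℚ) ^ (2 * k + 3) * bT (k + 1) n := by
  rw [bT, bT, bT, Finset.prod_Icc_succ_top (by omega : 1 ≤ n + 1)]
  rw [pow_succ (-1 : PowerSeries ℚ) n]
  ring

lemma Fq (k M : ℕ) :
    (1 + (X : PowerSeries ℚ) ^ (2 * k + 1)) * ∑ n ∈ Finset.range (M + 1), aT k n =
      X + (X : PowerSeries ℚ) ^ (2 * k + 3) * ∑ n ∈ Finset.range M, aT (k + 1) n := by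
  induction M with
  | zero => simpa using aT_zero k
  | succ M ih =>
      rw [Finset.sum_range_succ, mul_add, ih, Finset.sum_range_succ (aT (k + 1)), aT_succ]
      ring

lemma Gq (k M : ℕ) :
    (∑ n ∈ Finset.range (M + 2), bT k n) +
        (X : PowerSeries ℚ) ^ (2 * k + 1) * ∑ n ∈ Finset.range (M + 1), bT k n =
      X + (X : PowerSeries ℚ) ^ (2 * k + 3) * ∑ n ∈ Finset.range (M + 1), bT (k + 1) n := by
  induction M with
  | zero =>
      have h := bT_succ k 0
      simp only [bT_zero] at h
      simp only [Finset.sum_range_succ, Finset.sum_range_zero, bT_zero, zero_add]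
      linear_combination h
  | succ M ih =>
      rw [Finset.sum_range_succ (f := bT k) (n := M + 2),
        Finset.sum_range_succ (f := bT k) (n := M + 1),
        Finset.sum_range_succ (f := bT (k + 1))]
      rw [Finset.sum_range_succ (f := bT k) (n := M + 1)] at ih
      have h := bT_succ k (M + 1)
      linear_combination ih + h

lemma FFk_feq (k N : ℕ) :
    (X : PowerSeries ℚ) ^ (N + 1) ∣
      (1 + (X : PowerSeries ℚ) ^ (2 * k + 1)) * FFk k -
        (X + (X : PowerSeries ℚ) ^ (2 * k + 3) * FFk (k + 1)) := by
  have h1 := FFk_approx k N (N + 2) (by omega)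
  have h2 := FFk_approx (k + 1) N (N + 1) (by omega)
  have key := Fq k (N + 1)
  have hrw : (1 + (X : PowerSeries ℚ) ^ (2 * k + 1)) * FFk k -
      (X + (X : PowerSeries ℚ) ^ (2 * k + 3) * FFk (k + 1)) =
      (1 + (X : PowerSeries ℚ) ^ (2 * k + 1)) *
          (FFk k - ∑ n ∈ Finset.range (N + 2), aT k n) -
        (X : PowerSeries ℚ) ^ (2 * k + 3) *
          (FFk (k + 1) - ∑ n ∈ Finset.range (N + 1), aT (k + 1) n) := by
    linear_combination key
  rw [hrw]
  exact dvd_sub (h1.mul_left _) (h2.mul_left _)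

lemma GGk_feq (k N : ℕ) :
    (X : PowerSeries ℚ) ^ (N + 1) ∣
      (1 + (X : PowerSeries ℚ) ^ (2 * k + 1)) * GGk k -
        (X + (X : PowerSeries ℚ) ^ (2 * k + 3) * GGk (k + 1)) := by
  have h1 := GGk_approx k N (N + 2) (by omega)
  have h2 := GGk_approx k N (N + 1) (by omega)
  have h3 := GGk_approx (k + 1) N (N + 1) (by omega)
  have key := Gq k N
  have hrw : (1 + (X : PowerSeries ℚ) ^ (2 * k + 1)) * GGk k -
      (X + (X : PowerSeries ℚ) ^ (2 * k + 3) * GGk (k + 1)) =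
      ((GGk k - ∑ n ∈ Finset.range (N + 2), bT k n) +
        (X : PowerSeries ℚ) ^ (2 * k + 1) *
          (GGk k - ∑ n ∈ Finset.range (N + 1), bT k n)) -
        (X : PowerSeries ℚ) ^ (2 * k + 3) *
          (GGk (k + 1) - ∑ n ∈ Finset.range (N + 1), bT (k + 1) n) := by
    linear_combination key
  rw [hrw]
  exact dvd_sub (dvd_add h1 (h2.mul_left _)) (h3.mul_left _)

lemma EE_dvd (N : ℕ) : ∀ i k, (X : PowerSeries ℚ) ^ (min (N + 1) i) ∣ FFk k - GGk k := by
  intro i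
  induction i with
  | zero => intro k; simp
  | succ i ih =>
      intro k
      have hd : (X : PowerSeries ℚ) ^ (N + 1) ∣
          (1 + (X : PowerSeries ℚ) ^ (2 * k + 1)) * (FFk k - GGk k) -
            (X : PowerSeries ℚ) ^ (2 * k + 3) * (FFk (k + 1) - GGk (k + 1)) := by
        have h := dvd_sub (FFk_feq k N) (GGk_feq k N)
        have hrw : (1 + (X : PowerSeries ℚ) ^ (2 * k + 1)) * FFk k -
              (X + (X : PowerSeries ℚ) ^ (2 * k + 3) * FFk (k + 1)) -
            ((1 + (X : PowerSeries ℚ) ^ (2 * k + 1)) * GGk k -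
              (X + (X : PowerSeries ℚ) ^ (2 * k + 3) * GGk (k + 1))) =
            (1 + (X : PowerSeries ℚ) ^ (2 * k + 1)) * (FFk k - GGk k) -
              (X : PowerSeries ℚ) ^ (2 * k + 3) * (FFk (k + 1) - GGk (k + 1)) := by ring
        rwa [hrw] at h
      have ht : (X : PowerSeries ℚ) ^ (min (N + 1) i + 1) ∣
          (X : PowerSeries ℚ) ^ (2 * k + 3) * (FFk (k + 1) - GGk (k + 1)) := by
        rw [pow_succ, mul_comm ((X : PowerSeries ℚ) ^ (min (N + 1) i)) X]
        exact mul_dvd_mul (dvd_pow_self _ (by omega)) (ih (k + 1))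
      have hc1 : min (N + 1) (i + 1) ≤ N + 1 := min_le_left _ _
      have hc2 : min (N + 1) (i + 1) ≤ min (N + 1) i + 1 := by omega
      have hsum : (X : PowerSeries ℚ) ^ (min (N + 1) (i + 1)) ∣
          (1 + (X : PowerSeries ℚ) ^ (2 * k + 1)) * (FFk k - GGk k) := by
        have h := dvd_add ((pow_dvd_pow _ hc1).trans hd) ((pow_dvd_pow _ hc2).trans ht)
        simpa using h
      have huc : constantCoeff (1 + (X : PowerSeries ℚ) ^ (2 * k + 1)) ≠ 0 := by simp
      have hinv : (1 + (X : PowerSeries ℚ) ^ (2 * k + 1))⁻¹ *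
          (1 + (X : PowerSeries ℚ) ^ (2 * k + 1)) = 1 := PowerSeries.inv_mul_cancel _ huc
      have hre : FFk k - GGk k = (1 + (X : PowerSeries ℚ) ^ (2 * k + 1))⁻¹ *
          ((1 + (X : PowerSeries ℚ) ^ (2 * k + 1)) * (FFk k - GGk k)) := by
        rw [← mul_assoc, hinv, one_mul]
      rw [hre]
      exact hsum.mul_left _

lemma FFk_eq_GGk : FFk 0 = GGk 0 := by
  ext N
  have h := EE_dvd N (N + 1) 0
  rw [min_self] at h
  have h2 := PowerSeries.X_pow_dvd_iff.mp h N (by omega)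
  rw [map_sub, sub_eq_zero] at h2
  exact h2

lemma sum_Icc_one (f : ℕ → PowerSeries ℚ) (M : ℕ) :
    ∑ n ∈ Finset.Icc 1 M, f n = ∑ m ∈ Finset.range M, f (m + 1) := by
  induction M with
  | zero => simp
  | succ M ih => rw [Finset.sum_Icc_succ_top (by omega), ih, Finset.sum_range_succ]

lemma sig_eq : sigmaStarSum = FFk 0 := by
  ext N
  rw [sigmaStarSum, FFk, coeff_mk, coeff_mk]
  congr 1
  rw [sum_Icc_one]
  refine Finset.sum_congr rfl fun m _ => ?_
  rw [aT]
  norm_num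

lemma alt_eq : altSum = GGk 0 := by
  ext N
  rw [altSum, GGk, coeff_mk, coeff_mk]
  congr 1
  rw [sum_Icc_one]
  refine Finset.sum_congr rfl fun m _ => ?_
  rw [bT]
  norm_num

/-- `Σ_{n≥1} q^{n²}/(−q;q²)_n = Σ_{n≥1} (−1)^{n−1} q^n (q²;q²)_{n−1}`. -/
theorem stmt_11 : sigmaStarSum = altSum := by
  rw [sig_eq, alt_eq, FFk_eq_GGk]
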